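/- In the tree-recognition system: if G is a tree and G ⇒_𝓡 H, then H is a tree; and if G is not a tree and G ⇒_𝓡 H, then H is not a tree (G, H TLRGs over 𝓛). -/

import Mathlib

/-! # Rooted graph transformation with relabelling -/

/-- A graph over a label alphabet `(LV, LE)`: finite vertex and edge sets, total
source/target functions, a partial node-labelling function `l`, a total
edge-labelling function `m`, and a partial rootedness function `p`
(`some true` = root node, `some false` = non-root, `none` = undefined). -/
structure GTGraph (LV LE : Type) : Type 1 where
  V : Type
  E : Type
  finV : Finite V
  finE : Finite E
  s : E → V
  t : E → V
  l : V → Option LV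
  m : E → LE
  p : V → Option Bool

namespace GTGraph

variable {LV LE : Type}

def IsTotallyLabelled (G : GTGraph LV LE) : Prop := ∀ v, (G.l v).isSome
def IsTotallyRooted (G : GTGraph LV LE) : Prop := ∀ v, (G.p v).isSome
/-- totally labelled, totally rooted graph -/
def IsTLRG (G : GTGraph LV LE) : Prop := G.IsTotallyLabelled ∧ G.IsTotallyRooted

/-- The number of root nodes `|p⁻¹({1})|`. -/
noncomputable def rootCount (G : GTGraph LV LE) : ℕ := Nat.card {v : G.V // G.p v = some true}

/-- The degree of a node. -/
noncomputable def degree (G : GTGraph LV LE) (v : G.V) : ℕ :=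
  Nat.card {e : G.E // G.s e = v} + Nat.card {e : G.E // G.t e = v}

end GTGraph

/-- GTGraph morphisms preserve sources, targets, edge labels, and node labels and
rootedness wherever these are defined. -/
structure Morphism {LV LE : Type} (G H : GTGraph LV LE) : Type where
  fV : G.V → H.V
  fE : G.E → H.E
  src : ∀ e, fV (G.s e) = H.s (fE e)
  tgt : ∀ e, fV (G.t e) = H.t (fE e)
  edgeLabel : ∀ e, G.m e = H.m (fE e)
  nodeLabel : ∀ v x, G.l v = some x → H.l (fV v) = some x
  rootedness : ∀ v b, G.p v = some b → H.p (fV v) = some b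

namespace Morphism

variable {LV LE : Type} {G H K : GTGraph LV LE}

def Injective (g : Morphism G H) : Prop := Function.Injective g.fV ∧ Function.Injective g.fE

/-- identity morphism -/
def ident (G : GTGraph LV LE) : Morphism G G where
  fV := id
  fE := id
  src := fun _ => rfl
  tgt := fun _ => rfl
  edgeLabel := fun _ => rfl
  nodeLabel := fun _ _ h => h
  rootedness := fun _ _ h => h

/-- composition of morphisms -/
def comp (g : Morphism G H) (h : Morphism H K) : Morphism G K where
  fV := h.fV ∘ g.fV
  fE := h.fE ∘ g.fE
  src := fun e => by simp [Function.comp, g.src e, h.src (g.fE e)]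
  tgt := fun e => by simp [Function.comp, g.tgt e, h.tgt (g.fE e)]
  edgeLabel := fun e => by simp [Function.comp, ← h.edgeLabel (g.fE e), g.edgeLabel e]
  nodeLabel := fun v x hx => h.nodeLabel _ _ (g.nodeLabel v x hx)
  rootedness := fun v b hb => h.rootedness _ _ (g.rootedness v b hb)

end Morphism

/-- An isomorphism of graphs: a morphism with a two-sided inverse morphism. -/
structure Iso {LV LE : Type} (G H : GTGraph LV LE) : Type where
  toMor : Morphism G H
  invMor : Morphism H G
  leftV : ∀ v, invMor.fV (toMor.fV v) = v
  leftE : ∀ e, invMor.fE (toMor.fE e) = e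
  rightV : ∀ v, toMor.fV (invMor.fV v) = v
  rightE : ∀ e, toMor.fE (invMor.fE e) = e

/-- A rule `⟨L ← K → R⟩`: graphs `L`, `K`, `R` together with inclusion
(injective) morphisms `K ↪ L` and `K ↪ R`.  (In the rooted relabelling setting
`L` and `R` are additionally required to be TLRGs; this requirement is stated
as a hypothesis where needed.) -/
structure Rule (LV LE : Type) : Type 1 where
  L : GTGraph LV LE
  K : GTGraph LV LE
  R : GTGraph LV LE
  incL : Morphism K L
  incR : Morphism K R
  injL : incL.Injective
  injR : incR.Injective

namespace Rule

variable {LV LE : Type} (r : Rule LV LE) (G : GTGraph LV LE)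

/-- The inverse rule `r⁻¹ = ⟨R ← K → L⟩`. -/
def inv (r : Rule LV LE) : Rule LV LE where
  L := r.R
  K := r.K
  R := r.L
  incL := r.incR
  incR := r.incL
  injL := r.injR
  injR := r.injL

/-- The dangling condition: no edge of `G ∖ g(L)` is incident to a node of `g(L ∖ K)`. -/
def Dangling (g : Morphism r.L G) : Prop :=
  ∀ e : G.E, (∀ e' : r.L.E, g.fE e' ≠ e) →
    ∀ v : r.L.V, (∀ k : r.K.V, r.incL.fV k ≠ v) →
      G.s e ≠ g.fV v ∧ G.t e ≠ g.fV v

/-- The match `g` is applicable: it is injective and satisfies the dangling condition. -/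
def Applicable (g : Morphism r.L G) : Prop := g.Injective ∧ r.Dangling G g

/-- the nodes `g(L ∖ K)` deleted by applying `r` via `g` -/
def DelV (g : Morphism r.L G) : Set G.V :=
  {x | ∃ v : r.L.V, (∀ k : r.K.V, r.incL.fV k ≠ v) ∧ g.fV v = x}

/-- the edges `g(L ∖ K)` deleted by applying `r` via `g` -/
def DelE (g : Morphism r.L G) : Set G.E :=
  {x | ∃ e : r.L.E, (∀ k : r.K.E, r.incL.fE k ≠ e) ∧ g.fE e = x}

theorem kept_incL {g : Morphism r.L G} (hinj : g.Injective) (k : r.K.V) :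
    g.fV (r.incL.fV k) ∉ r.DelV G g := by
  rintro ⟨v, hv, heq⟩
  exact hv k (hinj.1 heq).symm

theorem kept_src {g : Morphism r.L G} (h : r.Applicable G g) {e : G.E}
    (he : e ∉ r.DelE G g) : G.s e ∉ r.DelV G g := by
  rintro ⟨v, hv, heq⟩
  by_cases hc : ∃ e', g.fE e' = e
  · obtain ⟨e', rfl⟩ := hc
    by_cases hk : ∃ k, r.incL.fE k = e'
    · obtain ⟨k, rfl⟩ := hk
      have h1 : g.fV (r.L.s (r.incL.fE k)) = G.s (g.fE (r.incL.fE k)) := g.src _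
      have h2 : r.incL.fV (r.K.s k) = r.L.s (r.incL.fE k) := r.incL.src k
      have h3 : g.fV v = g.fV (r.incL.fV (r.K.s k)) := by rw [heq, h2, h1]
      exact hv _ (h.1.1 h3).symm
    · exact he ⟨e', fun k hk' => hk ⟨k, hk'⟩, rfl⟩
  · exact (h.2 e (fun e' he' => hc ⟨e', he'⟩) v hv).1 heq.symm

theorem kept_tgt {g : Morphism r.L G} (h : r.Applicable G g) {e : G.E}
    (he : e ∉ r.DelE G g) : G.t e ∉ r.DelV G g := by
  rintro ⟨v, hv, heq⟩
  by_cases hc : ∃ e', g.fE e' = e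
  · obtain ⟨e', rfl⟩ := hc
    by_cases hk : ∃ k, r.incL.fE k = e'
    · obtain ⟨k, rfl⟩ := hk
      have h1 : g.fV (r.L.t (r.incL.fE k)) = G.t (g.fE (r.incL.fE k)) := g.tgt _
      have h2 : r.incL.fV (r.K.t k) = r.L.t (r.incL.fE k) := r.incL.tgt k
      have h3 : g.fV v = g.fV (r.incL.fV (r.K.t k)) := by rw [heq, h2, h1]
      exact hv _ (h.1.1 h3).symm
    · exact he ⟨e', fun k hk' => hk ⟨k, hk'⟩, rfl⟩
  · exact (h.2 e (fun e' he' => hc ⟨e', he'⟩) v hv).2 heq.symm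

attribute [local instance] Classical.propDecidable

/-- The result graph of applying `r` to `G` via an applicable match `g`:
delete `g(L ∖ K)` (undefining labels/rootedness of images of interface nodes
where they are undefined in `K`), then add `R ∖ K` disjointly, relabelling
(and re-rooting) the images of interface nodes according to `R`. -/
noncomputable def result (g : Morphism r.L G) (h : r.Applicable G g) : GTGraph LV LE where
  V := {x : G.V // x ∉ r.DelV G g} ⊕ {v : r.R.V // ∀ k, r.incR.fV k ≠ v}
  E := {x : G.E // x ∉ r.DelE G g} ⊕ {e : r.R.E // ∀ k, r.incR.fE k ≠ e}
  finV := by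
    haveI := G.finV; haveI := r.R.finV
    infer_instance
  finE := by
    haveI := G.finE; haveI := r.R.finE
    infer_instance
  s := fun e =>
    match e with
    | Sum.inl x => Sum.inl ⟨G.s x.1, r.kept_src G h x.2⟩
    | Sum.inr x =>
        if hk : ∃ k, r.incR.fV k = r.R.s x.1 then
          Sum.inl ⟨g.fV (r.incL.fV hk.choose), r.kept_incL G h.1 _⟩
        else Sum.inr ⟨r.R.s x.1, fun k hk' => hk ⟨k, hk'⟩⟩
  t := fun e =>
    match e with
    | Sum.inl x => Sum.inl ⟨G.t x.1, r.kept_tgt G h x.2⟩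
    | Sum.inr x =>
        if hk : ∃ k, r.incR.fV k = r.R.t x.1 then
          Sum.inl ⟨g.fV (r.incL.fV hk.choose), r.kept_incL G h.1 _⟩
        else Sum.inr ⟨r.R.t x.1, fun k hk' => hk ⟨k, hk'⟩⟩
  l := fun v =>
    match v with
    | Sum.inl x =>
        if hk : ∃ k : r.K.V, r.K.l k = none ∧ g.fV (r.incL.fV k) = x.1 then
          r.R.l (r.incR.fV hk.choose)
        else G.l x.1
    | Sum.inr v => r.R.l v.1
  m := fun e =>
    match e with
    | Sum.inl x => G.m x.1
    | Sum.inr x => r.R.m x.1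
  p := fun v =>
    match v with
    | Sum.inl x =>
        if hk : ∃ k : r.K.V, r.K.p k = none ∧ g.fV (r.incL.fV k) = x.1 then
          r.R.p (r.incR.fV hk.choose)
        else G.p x.1
    | Sum.inr v => r.R.p v.1

/-- Direct derivation `G ⇒_r M`: there is an applicable match `g` such that `M`
is isomorphic to the result of applying `r` to `G` via `g`. -/
def Deriv (r : Rule LV LE) (G M : GTGraph LV LE) : Prop :=
  ∃ (g : Morphism r.L G) (h : r.Applicable G g), Nonempty (Iso (r.result G g h) M)

end Rule

/-- `G ⇒_𝓡 H` for a set of rules. -/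
def GTStep {LV LE : Type} (Rs : Set (Rule LV LE)) (G H : GTGraph LV LE) : Prop :=
  ∃ r ∈ Rs, r.Deriv G H

/-- `G ⇒*_𝓡 H`: the reflexive-transitive closure of `⇒_𝓡`, up to isomorphism. -/
def GTDerivStar {LV LE : Type} (Rs : Set (Rule LV LE)) (G H : GTGraph LV LE) : Prop :=
  Relation.ReflTransGen (GTStep Rs) G H ∨ Nonempty (Iso G H)
/-! ## The tree-recognition system -/

/-- node labels: `□` (square) and `△` (triangle) -/
inductive NodeLab : Type where
  | square : NodeLab
  | tri : NodeLab
deriving DecidableEq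

/-- `L` of rule `r0`: `v1 --□--> v2`, both `□`-labelled, `v1` unrooted, `v2` rooted. -/
abbrev L0 : GTGraph NodeLab Unit where
  V := Fin 2
  E := Unit
  finV := inferInstance
  finE := inferInstance
  s := fun _ => 0
  t := fun _ => 1
  l := fun _ => some .square
  m := fun _ => ()
  p := ![some false, some true]

/-- `K` of rules `r0` and `r1`: the single node `v1`, unlabelled, rootedness undefined. -/
abbrev K0 : GTGraph NodeLab Unit where
  V := Unit
  E := PEmpty
  finV := inferInstance
  finE := inferInstance
  s := PEmpty.elim
  t := PEmpty.elim
  l := fun _ => none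
  m := PEmpty.elim
  p := fun _ => none

/-- `R` of rules `r0` and `r1`: the single node `v1`, labelled `□`, rooted. -/
abbrev R0 : GTGraph NodeLab Unit where
  V := Unit
  E := PEmpty
  finV := inferInstance
  finE := inferInstance
  s := PEmpty.elim
  t := PEmpty.elim
  l := fun _ => some .square
  m := PEmpty.elim
  p := fun _ => some true

def incL0 : Morphism K0 L0 where
  fV := fun _ => 0
  fE := PEmpty.elim
  src := fun e => e.elim
  tgt := fun e => e.elim
  edgeLabel := fun e => e.elim
  nodeLabel := fun _ _ h => nomatch h
  rootedness := fun _ _ h => nomatch h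

def incR0 : Morphism K0 R0 where
  fV := id
  fE := PEmpty.elim
  src := fun e => e.elim
  tgt := fun e => e.elim
  edgeLabel := fun e => e.elim
  nodeLabel := fun _ _ h => nomatch h
  rootedness := fun _ _ h => nomatch h

/-- rule `r0`: prune a rooted `□`-leaf with unrooted `□`-parent, root moves to the parent -/
def r0 : Rule NodeLab Unit where
  L := L0
  K := K0
  R := R0
  incL := incL0
  incR := incR0
  injL := ⟨Function.injective_of_subsingleton _, Function.injective_of_subsingleton _⟩
  injR := ⟨Function.injective_of_subsingleton _, Function.injective_of_subsingleton _⟩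

/-- `L` of rule `r1`: like `L0` but `v1` is labelled `△`. -/
abbrev L1 : GTGraph NodeLab Unit where
  V := Fin 2
  E := Unit
  finV := inferInstance
  finE := inferInstance
  s := fun _ => 0
  t := fun _ => 1
  l := ![some .tri, some .square]
  m := fun _ => ()
  p := ![some false, some true]

def incL1 : Morphism K0 L1 where
  fV := fun _ => 0
  fE := PEmpty.elim
  src := fun e => e.elim
  tgt := fun e => e.elim
  edgeLabel := fun e => e.elim
  nodeLabel := fun _ _ h => nomatch h
  rootedness := fun _ _ h => nomatch h

/-- rule `r1`: prune a rooted `□`-leaf with unrooted `△`-parent, root moves to the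
parent which becomes `□`-labelled -/
def r1 : Rule NodeLab Unit where
  L := L1
  K := K0
  R := R0
  incL := incL1
  incR := incR0
  injL := ⟨Function.injective_of_subsingleton _, Function.injective_of_subsingleton _⟩
  injR := ⟨Function.injective_of_subsingleton _, Function.injective_of_subsingleton _⟩

/-- `L` of rule `r2`: `v1 --□--> v2`, both `□`-labelled, `v1` rooted, `v2` unrooted. -/
abbrev L2 : GTGraph NodeLab Unit where
  V := Fin 2
  E := Unit
  finV := inferInstance
  finE := inferInstance
  s := fun _ => 0
  t := fun _ => 1
  l := fun _ => some .square
  m := fun _ => ()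
  p := ![some true, some false]

/-- `K` of rule `r2`: nodes `v1, v2`, unlabelled, rootedness undefined, no edges. -/
abbrev K2 : GTGraph NodeLab Unit where
  V := Fin 2
  E := PEmpty
  finV := inferInstance
  finE := inferInstance
  s := PEmpty.elim
  t := PEmpty.elim
  l := fun _ => none
  m := PEmpty.elim
  p := fun _ => none

/-- `R` of rule `r2`: `v1 --□--> v2`, `v1` labelled `△` and unrooted, `v2` labelled `□`
and rooted. -/
abbrev R2 : GTGraph NodeLab Unit where
  V := Fin 2
  E := Unit
  finV := inferInstance
  finE := inferInstance
  s := fun _ => 0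
  t := fun _ => 1
  l := ![some .tri, some .square]
  m := fun _ => ()
  p := ![some false, some true]

def incL2 : Morphism K2 L2 where
  fV := id
  fE := PEmpty.elim
  src := fun e => e.elim
  tgt := fun e => e.elim
  edgeLabel := fun e => e.elim
  nodeLabel := fun _ _ h => nomatch h
  rootedness := fun _ _ h => nomatch h

def incR2 : Morphism K2 R2 where
  fV := id
  fE := PEmpty.elim
  src := fun e => e.elim
  tgt := fun e => e.elim
  edgeLabel := fun e => e.elim
  nodeLabel := fun _ _ h => nomatch h
  rootedness := fun _ _ h => nomatch h

/-- rule `r2`: push the root one step down an edge, marking the old position `△` -/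
def r2 : Rule NodeLab Unit where
  L := L2
  K := K2
  R := R2
  incL := incL2
  incR := incR2
  injL := ⟨Function.injective_id, Function.injective_of_subsingleton _⟩
  injR := ⟨Function.injective_id, Function.injective_of_subsingleton _⟩

/-- the rule set of the tree-recognition system -/
def TreeRules : Set (Rule NodeLab Unit) := {r0, r1, r2}

/-! ## Trees -/

/-- `IsUndirWalk G v l w`: `l` is an undirected walk from `v` to `w` in `G`;
each step is an edge together with a boolean telling in which direction it is
traversed. -/
def IsUndirWalk {LV LE : Type} (G : GTGraph LV LE) : G.V → List (G.E × Bool) → G.V → Prop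
  | v, [], w => v = w
  | v, (e, true) :: rest, w => G.s e = v ∧ IsUndirWalk G (G.t e) rest w
  | v, (e, false) :: rest, w => G.t e = v ∧ IsUndirWalk G (G.s e) rest w

/-- connectedness via undirected walks -/
def IsConnectedGraph {LV LE : Type} (G : GTGraph LV LE) : Prop :=
  ∀ v w : G.V, ∃ l, IsUndirWalk G v l w

/-- an undirected cycle: a non-empty closed undirected walk without repeated edges -/
def HasUndirCycle {LV LE : Type} (G : GTGraph LV LE) : Prop :=
  ∃ (v : G.V) (l : List (G.E × Bool)), l ≠ [] ∧ IsUndirWalk G v l v ∧ (l.map Prod.fst).Nodup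

/-- a tree: non-empty, connected, no undirected cycles, and every node has at
most one incoming edge -/
def IsTree {LV LE : Type} (G : GTGraph LV LE) : Prop :=
  Nonempty G.V ∧ IsConnectedGraph G ∧ ¬ HasUndirCycle G ∧
    ∀ v : G.V, Nat.card {e : G.E // G.t e = v} ≤ 1

/-- an input graph: a TLRG with exactly one root node, all nodes labelled `□`
(all edges are `□`-labelled since `Unit` is the edge alphabet) -/
def IsInputGraph (G : GTGraph NodeLab Unit) : Prop :=
  G.IsTLRG ∧ (∀ v, G.l v = some .square) ∧ G.rootCount = 1

/-- no rule of `Rs` is applicable to `H` -/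
def InNormalForm {LV LE : Type} (Rs : Set (Rule LV LE)) (H : GTGraph LV LE) : Prop :=
  ¬ ∃ r ∈ Rs, ∃ g : Morphism r.L H, r.Applicable H g

/-! ## Auxiliary lemmas for the proof -/

section WalkLemmas

variable {LV LE : Type}

lemma walk_map {G H : GTGraph LV LE} (fV : G.V → H.V) (fE : G.E → H.E)
    (hs : ∀ e, fV (G.s e) = H.s (fE e)) (ht : ∀ e, fV (G.t e) = H.t (fE e)) :
    ∀ (l : List (G.E × Bool)) (v w : G.V), IsUndirWalk G v l w →
      IsUndirWalk H (fV v) (l.map fun p => (fE p.1, p.2)) (fV w) := by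
  intro l
  induction l with
  | nil => intro v w h; exact congrArg fV h
  | cons p rest ih =>
    obtain ⟨e, b⟩ := p
    intro v w h
    cases b with
    | true =>
      obtain ⟨h1, h2⟩ := h
      exact ⟨by rw [← hs, h1], by rw [← ht]; exact ih _ _ h2⟩
    | false =>
      obtain ⟨h1, h2⟩ := h
      exact ⟨by rw [← ht, h1], by rw [← hs]; exact ih _ _ h2⟩

lemma walk_append {G : GTGraph LV LE} :
    ∀ (l1 : List (G.E × Bool)) {v w u : G.V} {l2 : List (G.E × Bool)},
      IsUndirWalk G v l1 w → IsUndirWalk G w l2 u → IsUndirWalk G v (l1 ++ l2) u := by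
  intro l1
  induction l1 with
  | nil => intro v w u l2 h1 h2; cases h1; exact h2
  | cons p rest ih =>
    obtain ⟨e, b⟩ := p
    intro v w u l2 h1 h2
    cases b with
    | true => exact ⟨h1.1, ih h1.2 h2⟩
    | false => exact ⟨h1.1, ih h1.2 h2⟩

/-- structural equivalence: bijections on nodes and edges commuting with
source and target -/
structure SEquiv (G H : GTGraph LV LE) where
  eV : G.V ≃ H.V
  eE : G.E ≃ H.E
  hs : ∀ e, eV (G.s e) = H.s (eE e)
  ht : ∀ e, eV (G.t e) = H.t (eE e)

def SEquiv.symm {G H : GTGraph LV LE} (q : SEquiv G H) : SEquiv H G where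
  eV := q.eV.symm
  eE := q.eE.symm
  hs := fun e => by
    apply q.eV.injective
    rw [q.hs, Equiv.apply_symm_apply, Equiv.apply_symm_apply]
  ht := fun e => by
    apply q.eV.injective
    rw [q.ht, Equiv.apply_symm_apply, Equiv.apply_symm_apply]

lemma SEquiv.isTree {G H : GTGraph LV LE} (q : SEquiv G H) (hG : IsTree G) : IsTree H := by
  obtain ⟨hne, hconn, hcyc, hdeg⟩ := hG
  refine ⟨⟨q.eV hne.some⟩, ?_, ?_, ?_⟩
  · intro v w
    obtain ⟨l, hl⟩ := hconn (q.eV.symm v) (q.eV.symm w)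
    have := walk_map q.eV q.eE q.hs q.ht l _ _ hl
    rw [Equiv.apply_symm_apply, Equiv.apply_symm_apply] at this
    exact ⟨_, this⟩
  · rintro ⟨v, l, hne', hw, hnd⟩
    apply hcyc
    refine ⟨q.symm.eV v, l.map fun p => (q.symm.eE p.1, p.2), ?_, ?_, ?_⟩
    · simpa using hne'
    · exact walk_map q.symm.eV q.symm.eE q.symm.hs q.symm.ht l _ _ hw
    · rw [List.map_map]
      have : (Prod.fst ∘ fun p : H.E × Bool => ((q.symm.eE p.1 : G.E), p.2))
          = q.symm.eE ∘ Prod.fst := rfl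
      rw [this, ← List.map_map]
      exact hnd.map (q.symm.eE.injective)
  · intro v
    haveI := G.finE
    haveI : Finite {e : G.E // G.t e = q.eV.symm v} := Subtype.finite
    have hinj : Function.Injective
        (fun e' : {e' : H.E // H.t e' = v} =>
          (⟨q.eE.symm e'.1, by
            apply q.eV.injective
            rw [q.ht, Equiv.apply_symm_apply, e'.2, Equiv.apply_symm_apply]⟩ :
            {e : G.E // G.t e = q.eV.symm v})) := by
      intro a b hab
      apply Subtype.ext
      apply q.eE.symm.injective
      exact congrArg Subtype.val hab
    calc Nat.card {e' : H.E // H.t e' = v}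
        ≤ Nat.card {e : G.E // G.t e = q.eV.symm v} := Nat.card_le_card_of_injective _ hinj
      _ ≤ 1 := hdeg _

lemma SEquiv.isTree_iff {G H : GTGraph LV LE} (q : SEquiv G H) : IsTree G ↔ IsTree H :=
  ⟨q.isTree, q.symm.isTree⟩

def Iso.sequiv {G H : GTGraph LV LE} (i : Iso G H) : SEquiv G H where
  eV := ⟨i.toMor.fV, i.invMor.fV, i.leftV, i.rightV⟩
  eE := ⟨i.toMor.fE, i.invMor.fE, i.leftE, i.rightE⟩
  hs := i.toMor.src
  ht := i.toMor.tgt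

end WalkLemmas

/-! ### Leaf deletion -/

section Leaf

variable {LV LE : Type} (G : GTGraph LV LE) (e₀ : G.E)

/-- `G` with the leaf `t e₀` and the edge `e₀` removed -/
def delLeaf (hs : ∀ e, G.s e ≠ G.t e₀) (ht : ∀ e, G.t e = G.t e₀ → e = e₀) :
    GTGraph LV LE where
  V := {v : G.V // v ≠ G.t e₀}
  E := {e : G.E // e ≠ e₀}
  finV := by haveI := G.finV; exact Subtype.finite
  finE := by haveI := G.finE; exact Subtype.finite
  s := fun e => ⟨G.s e.1, hs e.1⟩
  t := fun e => ⟨G.t e.1, fun h => e.2 (ht e.1 h)⟩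
  l := fun _ => none
  m := fun e => G.m e.1
  p := fun _ => none

end Leaf
section LeafLemmas

attribute [local instance] Classical.propDecidable

variable {LV LE : Type} {G : GTGraph LV LE} {e₀ : G.E}
variable (hs : ∀ e, G.s e ≠ G.t e₀) (ht : ∀ e, G.t e = G.t e₀ → e = e₀)

include hs ht

/-- a walk between vertices other than the leaf can be purged of `e₀` -/
lemma purge : ∀ (n : ℕ) (l : List (G.E × Bool)) (v w : G.V), l.length ≤ n →
    IsUndirWalk G v l w → v ≠ G.t e₀ → w ≠ G.t e₀ →
    ∃ l', (∀ p ∈ l', p.1 ≠ e₀) ∧ IsUndirWalk G v l' w := by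
  intro n
  induction n with
  | zero =>
    intro l v w hlen hw _ _
    have hl : l = [] := List.length_eq_zero_iff.mp (Nat.le_zero.mp hlen)
    subst hl
    exact ⟨[], by simp, hw⟩
  | succ n ih =>
    intro l v w hlen hwalk hv hwn
    match l with
    | [] => exact ⟨[], by simp, hwalk⟩
    | (e, b) :: rest =>
      by_cases he : e = e₀
      · cases b with
        | false =>
          rw [he] at hwalk
          exact absurd hwalk.1 (fun h => hv h.symm)
        | true =>
          obtain ⟨h1, h2⟩ := hwalk
          rw [he] at h1 h2
          match rest, h2 with
          | [], h2 => exact absurd h2.symm hwn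
          | (e', b') :: rest2, h2 =>
            cases b' with
            | true => exact absurd h2.1 (hs e')
            | false =>
              obtain ⟨h3, h4⟩ := h2
              rw [ht e' h3, h1] at h4
              exact ih rest2 v w (by simp at hlen ⊢; omega) h4 hv hwn
      · cases b with
        | true =>
          obtain ⟨h1, h2⟩ := hwalk
          have hnext : G.t e ≠ G.t e₀ := fun h => he (ht e h)
          obtain ⟨l', hl'1, hl'2⟩ := ih rest (G.t e) w (by simp at hlen ⊢; omega) h2 hnext hwn
          refine ⟨(e, true) :: l', ?_, h1, hl'2⟩
          intro p hp
          rcases List.mem_cons.mp hp with rfl | hp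
          · exact he
          · exact hl'1 p hp
        | false =>
          obtain ⟨h1, h2⟩ := hwalk
          obtain ⟨l', hl'1, hl'2⟩ := ih rest (G.s e) w (by simp at hlen ⊢; omega) h2 (hs e) hwn
          refine ⟨(e, false) :: l', ?_, h1, hl'2⟩
          intro p hp
          rcases List.mem_cons.mp hp with rfl | hp
          · exact he
          · exact hl'1 p hp

/-- a walk avoiding `e₀` and starting away from the leaf lifts to `delLeaf` -/
lemma lift : ∀ (l : List (G.E × Bool)) (v w : G.V) (hv : v ≠ G.t e₀) (hw : w ≠ G.t e₀),
    IsUndirWalk G v l w → (∀ p ∈ l, p.1 ≠ e₀) →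
    ∃ l' : List ((delLeaf G e₀ hs ht).E × Bool),
      IsUndirWalk (delLeaf G e₀ hs ht) ⟨v, hv⟩ l' ⟨w, hw⟩ ∧
      l'.map (fun p => (p.1.1, p.2)) = l := by
  intro l
  induction l with
  | nil =>
    intro v w hv hw hwalk _
    exact ⟨[], Subtype.ext hwalk, rfl⟩
  | cons p rest ih =>
    obtain ⟨e, b⟩ := p
    intro v w hv hw hwalk hfree
    have he : e ≠ e₀ := hfree (e, b) (by simp)
    cases b with
    | true =>
      obtain ⟨h1, h2⟩ := hwalk
      have hnext : G.t e ≠ G.t e₀ := fun h => he (ht e h)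
      obtain ⟨l', hl'1, hl'2⟩ := ih (G.t e) w hnext hw h2 (fun p hp => hfree p (by simp [hp]))
      exact ⟨(⟨e, he⟩, true) :: l', ⟨Subtype.ext h1, hl'1⟩, by simp [hl'2]⟩
    | false =>
      obtain ⟨h1, h2⟩ := hwalk
      obtain ⟨l', hl'1, hl'2⟩ := ih (G.s e) w (hs e) hw h2 (fun p hp => hfree p (by simp [hp]))
      exact ⟨(⟨e, he⟩, false) :: l', ⟨Subtype.ext h1, hl'1⟩, by simp [hl'2]⟩

/-- a walk avoiding `e₀` cannot end at the leaf unless it started there -/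
lemma no_end_at_leaf : ∀ (l : List (G.E × Bool)) (v : G.V), v ≠ G.t e₀ →
    IsUndirWalk G v l (G.t e₀) → (∀ p ∈ l, p.1 ≠ e₀) → False := by
  intro l
  induction l with
  | nil => intro v hv hwalk _; exact hv hwalk
  | cons p rest ih =>
    obtain ⟨e, b⟩ := p
    intro v hv hwalk hfree
    have he : e ≠ e₀ := hfree (e, b) (by simp)
    cases b with
    | true =>
      exact ih (G.t e) (fun h => he (ht e h)) hwalk.2 (fun p hp => hfree p (by simp [hp]))
    | false =>
      exact ih (G.s e) (hs e) hwalk.2 (fun p hp => hfree p (by simp [hp]))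

/-- a walk with distinct edges between vertices other than the leaf avoids `e₀` -/
lemma nodup_avoids : ∀ (l : List (G.E × Bool)) (v w : G.V),
    IsUndirWalk G v l w → v ≠ G.t e₀ → w ≠ G.t e₀ → (l.map Prod.fst).Nodup →
    ∀ p ∈ l, p.1 ≠ e₀ := by
  intro l
  induction l with
  | nil => intro v w _ _ _ _ p hp; exact absurd hp List.not_mem_nil
  | cons q rest ih =>
    obtain ⟨e, b⟩ := q
    intro v w hwalk hv hw hnd
    simp only [List.map_cons] at hnd
    have hnd' := List.nodup_cons.mp hnd
    by_cases he : e = e₀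
    · exfalso
      cases b with
      | false =>
        rw [he] at hwalk
        exact hv hwalk.1.symm
      | true =>
        obtain ⟨h1, h2⟩ := hwalk
        rw [he] at h1 h2
        match rest, h2, hnd' with
        | [], h2, _ => exact hw h2.symm
        | (e', b') :: rest2, h2, hnd' =>
          cases b' with
          | true => exact hs e' h2.1
          | false =>
            have he' : e' = e₀ := ht e' h2.1
            exact hnd'.1 (by simp [he', he])
    · intro p hp
      rcases List.mem_cons.mp hp with rfl | hp2
      · exact he
      · cases b with
        | true =>
          exact ih (G.t e) w hwalk.2 (fun h => he (ht e h)) hw hnd'.2 p hp2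
        | false =>
          exact ih (G.s e) w hwalk.2 (hs e) hw hnd'.2 p hp2

lemma delLeaf_isTree_iff : IsTree G ↔ IsTree (delLeaf G e₀ hs ht) := by
  have hmapwalk := walk_map (G := delLeaf G e₀ hs ht) (H := G)
    (fun v => v.1) (fun e => e.1) (fun _ => rfl) (fun _ => rfl)
  constructor
  · rintro ⟨hne, hconn, hcyc, hdeg⟩
    refine ⟨⟨⟨G.s e₀, hs e₀⟩⟩, ?_, ?_, ?_⟩
    · rintro ⟨v, hv⟩ ⟨w, hw⟩
      obtain ⟨l, hl⟩ := hconn v w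
      obtain ⟨l', hfree, hl'⟩ := purge hs ht l.length l v w le_rfl hl hv hw
      obtain ⟨l'', hl''1, _⟩ := lift hs ht l' v w hv hw hl' hfree
      exact ⟨l'', hl''1⟩
    · rintro ⟨⟨v, hv⟩, l, hlne, hw, hnd⟩
      apply hcyc
      refine ⟨v, l.map fun p => (p.1.1, p.2), by simpa using hlne, hmapwalk l _ _ hw, ?_⟩
      rw [List.map_map]
      have heq : (Prod.fst ∘ fun p : (delLeaf G e₀ hs ht).E × Bool => ((p.1.1 : G.E), p.2))
          = Subtype.val ∘ Prod.fst := rfl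
      rw [heq]
      have h' := hnd.map (f := fun x : (delLeaf G e₀ hs ht).E => x.1) Subtype.val_injective
      rwa [List.map_map] at h'
    · rintro ⟨v, hv⟩
      haveI := G.finE
      haveI : Finite {e : G.E // G.t e = v} := Subtype.finite
      have hinj : Function.Injective
          (fun e' : {e' : (delLeaf G e₀ hs ht).E // (delLeaf G e₀ hs ht).t e' = ⟨v, hv⟩} =>
            (⟨e'.1.1, congrArg Subtype.val e'.2⟩ : {e : G.E // G.t e = v})) := by
        intro a b hab
        simp only [Subtype.mk.injEq] at hab
        apply Subtype.ext; apply Subtype.ext; exact congrArg (fun x : {e : G.E // G.t e = v} => x.1) hab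
      calc Nat.card {e' : (delLeaf G e₀ hs ht).E // (delLeaf G e₀ hs ht).t e' = ⟨v, hv⟩}
          ≤ Nat.card {e : G.E // G.t e = v} := Nat.card_le_card_of_injective _ hinj
        _ ≤ 1 := hdeg v
  · rintro ⟨hne, hconn, hcyc, hdeg⟩
    have projwalk : ∀ v : G.V, ∃ (v' : (delLeaf G e₀ hs ht).V)
        (l1 l2 : List (G.E × Bool)), IsUndirWalk G v l1 v'.1 ∧ IsUndirWalk G v'.1 l2 v := by
      intro v
      by_cases h : v = G.t e₀
      · exact ⟨⟨G.s e₀, hs e₀⟩, [(e₀, false)], [(e₀, true)], ⟨h.symm, rfl⟩, ⟨rfl, h.symm⟩⟩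
      · exact ⟨⟨v, h⟩, [], [], rfl, rfl⟩
    refine ⟨⟨G.t e₀⟩, ?_, ?_, ?_⟩
    · intro v w
      obtain ⟨v', l1, _, hl1, _⟩ := projwalk v
      obtain ⟨w', _, l2, _, hl2⟩ := projwalk w
      obtain ⟨lm, hlm⟩ := hconn v' w'
      have hmid := hmapwalk lm _ _ hlm
      exact ⟨l1 ++ (lm.map fun p => (p.1.1, p.2)) ++ l2,
        walk_append _ (walk_append _ hl1 hmid) hl2⟩
    · rintro ⟨v, l, hlne, hw, hnd⟩
      by_cases hv : v = G.t e₀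
      · subst hv
        match l, hw, hnd with
        | (e, b) :: rest, hw, hnd =>
          simp only [List.map_cons] at hnd
          have hnd' := List.nodup_cons.mp hnd
          cases b with
          | true => exact hs e hw.1
          | false =>
            have he : e = e₀ := ht e hw.1
            have hfree : ∀ p ∈ rest, p.1 ≠ e₀ := by
              intro p hp hpe
              exact hnd'.1 (he ▸ hpe ▸ List.mem_map_of_mem (f := Prod.fst) hp)
            have hw2 := hw.2
            rw [he] at hw2
            exact no_end_at_leaf hs ht rest (G.s e₀) (hs e₀) hw2 hfree
      · have hfree := nodup_avoids hs ht l v v hw hv hv hnd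
        obtain ⟨l', hl'1, hl'2⟩ := lift hs ht l v v hv hv hw hfree
        apply hcyc
        refine ⟨⟨v, hv⟩, l', ?_, hl'1, ?_⟩
        · intro h; rw [h] at hl'2; exact hlne hl'2.symm
        · have heq : l.map Prod.fst = (l'.map Prod.fst).map Subtype.val := by
            rw [← hl'2, List.map_map]
            exact (show List.map Subtype.val (List.map Prod.fst l') = _ from List.map_map).symm
          rw [heq] at hnd
          exact hnd.of_map
    · intro v
      haveI := G.finE
      by_cases hv : v = G.t e₀
      · subst hv
        haveI : Subsingleton {e : G.E // G.t e = G.t e₀} :=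
          ⟨fun a b => Subtype.ext ((ht _ a.2).trans (ht _ b.2).symm)⟩
        rcases isEmpty_or_nonempty {e : G.E // G.t e = G.t e₀} with h | h
        · simp [Nat.card_of_isEmpty]
        · exact le_of_eq Nat.card_unique
      · haveI : Finite {e' : (delLeaf G e₀ hs ht).E // (delLeaf G e₀ hs ht).t e' = ⟨v, hv⟩} := by
          haveI : Finite (delLeaf G e₀ hs ht).E := (delLeaf G e₀ hs ht).finE
          exact Subtype.finite
        have hinj : Function.Injective
            (fun e : {e : G.E // G.t e = v} =>
              (⟨⟨e.1, fun h => hv (by rw [← e.2, h])⟩, Subtype.ext e.2⟩ :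
                {e' : (delLeaf G e₀ hs ht).E // (delLeaf G e₀ hs ht).t e' = ⟨v, hv⟩})) := by
          intro a b hab
          simp only [Subtype.mk.injEq] at hab
          apply Subtype.ext
          exact congrArg (fun x : (delLeaf G e₀ hs ht).E => x.1)
            (congrArg (fun x : {e' : (delLeaf G e₀ hs ht).E // (delLeaf G e₀ hs ht).t e' = ⟨v, hv⟩} => x.1) hab)
        calc Nat.card {e : G.E // G.t e = v}
            ≤ Nat.card {e' : (delLeaf G e₀ hs ht).E // (delLeaf G e₀ hs ht).t e' = ⟨v, hv⟩} :=
              Nat.card_le_card_of_injective _ hinj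
          _ ≤ 1 := hdeg _

end LeafLemmas
section RuleLemmas

attribute [local instance] Classical.propDecidable

variable (G : GTGraph NodeLab Unit)

/-- reduce `result.s` on a newly added edge -/
lemma result_s_inr {LV LE : Type} (r : Rule LV LE) (G' : GTGraph LV LE)
    (g : Morphism r.L G') (h : r.Applicable G' g)
    (x : {e : r.R.E // ∀ k, r.incR.fE k ≠ e}) (k0 : r.K.V)
    (hk0 : r.incR.fV k0 = r.R.s x.1) (hinj : Function.Injective r.incR.fV) :
    (r.result G' g h).s (Sum.inr x) =
      Sum.inl ⟨g.fV (r.incL.fV k0), r.kept_incL G' h.1 k0⟩ := by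
  have hk : ∃ k, r.incR.fV k = r.R.s x.1 := ⟨k0, hk0⟩
  show ((if hk : ∃ k, r.incR.fV k = r.R.s x.1 then
      Sum.inl ⟨g.fV (r.incL.fV hk.choose), r.kept_incL G' h.1 hk.choose⟩
    else Sum.inr ⟨r.R.s x.1, fun k hk' => hk ⟨k, hk'⟩⟩ :
      {x : G'.V // x ∉ r.DelV G' g} ⊕ {v : r.R.V // ∀ k, r.incR.fV k ≠ v})) =
    Sum.inl ⟨g.fV (r.incL.fV k0), r.kept_incL G' h.1 k0⟩
  rw [dif_pos hk]
  have hc : hk.choose = k0 := hinj (hk.choose_spec.trans hk0.symm)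
  rw [hc]

lemma result_t_inr {LV LE : Type} (r : Rule LV LE) (G' : GTGraph LV LE)
    (g : Morphism r.L G') (h : r.Applicable G' g)
    (x : {e : r.R.E // ∀ k, r.incR.fE k ≠ e}) (k0 : r.K.V)
    (hk0 : r.incR.fV k0 = r.R.t x.1) (hinj : Function.Injective r.incR.fV) :
    (r.result G' g h).t (Sum.inr x) =
      Sum.inl ⟨g.fV (r.incL.fV k0), r.kept_incL G' h.1 k0⟩ := by
  have hk : ∃ k, r.incR.fV k = r.R.t x.1 := ⟨k0, hk0⟩
  show ((if hk : ∃ k, r.incR.fV k = r.R.t x.1 then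
      Sum.inl ⟨g.fV (r.incL.fV hk.choose), r.kept_incL G' h.1 hk.choose⟩
    else Sum.inr ⟨r.R.t x.1, fun k hk' => hk ⟨k, hk'⟩⟩ :
      {x : G'.V // x ∉ r.DelV G' g} ⊕ {v : r.R.V // ∀ k, r.incR.fV k ≠ v})) =
    Sum.inl ⟨g.fV (r.incL.fV k0), r.kept_incL G' h.1 k0⟩
  rw [dif_pos hk]
  have hc : hk.choose = k0 := hinj (hk.choose_spec.trans hk0.symm)
  rw [hc]

/-! ### rule r0 -/

lemma r0_case (g : Morphism r0.L G) (h : r0.Applicable G g) :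
    IsTree G ↔ IsTree (r0.result G g h) := by
  have hT : G.t (g.fE ()) = g.fV (1 : Fin 2) := (g.tgt ()).symm
  have hS : G.s (g.fE ()) = g.fV (0 : Fin 2) := (g.src ()).symm
  have h01 : g.fV (0 : Fin 2) ≠ g.fV (1 : Fin 2) := fun h' => absurd (show (0 : Fin 2) = 1 from h.1.1 h') (by simp [Fin.ext_iff])
  have hno1 : ∀ k : r0.K.V, r0.incL.fV k ≠ (1 : Fin 2) :=
    fun k hk => absurd (show (0 : Fin 2) = 1 from hk) (by simp [Fin.ext_iff])
  have hdang : ∀ e : G.E, e ≠ g.fE () →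
      G.s e ≠ g.fV (1 : Fin 2) ∧ G.t e ≠ g.fV (1 : Fin 2) := by
    intro e hc
    exact h.2 e (fun e' he' => hc (by cases e'; exact he'.symm)) (1 : Fin 2) hno1
  have hs' : ∀ e, G.s e ≠ G.t (g.fE ()) := by
    intro e heq
    rw [hT] at heq
    by_cases hc : e = g.fE ()
    · rw [hc, hS] at heq; exact h01 heq
    · exact (hdang e hc).1 heq
  have ht' : ∀ e, G.t e = G.t (g.fE ()) → e = g.fE () := by
    intro e heq
    by_contra hc
    rw [hT] at heq
    exact (hdang e hc).2 heq
  have hdelV : ∀ x : G.V, x ∉ r0.DelV G g ↔ x ≠ G.t (g.fE ()) := by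
    intro x
    rw [hT]
    constructor
    · intro hx heq
      exact hx ⟨(1 : Fin 2), hno1, heq.symm⟩
    · rintro hx ⟨v, hv, rfl⟩
      have hv1 : v = (1 : Fin 2) := by
        have h0' : v.val ≠ 0 := fun h => hv () (Fin.ext h.symm)
        have hlt := v.isLt
        exact Fin.ext (show v.val = 1 by omega)
      rw [hv1] at hx
      exact hx rfl
  have hdelE : ∀ x : G.E, x ∉ r0.DelE G g ↔ x ≠ g.fE () := by
    intro x
    constructor
    · intro hx heq
      exact hx ⟨(), fun k => k.elim, heq.symm⟩
    · rintro hx ⟨e, _, rfl⟩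
      cases e
      exact hx rfl
  have q : SEquiv (delLeaf G (g.fE ()) hs' ht') (r0.result G g h) := by
    refine ⟨⟨fun y => Sum.inl ⟨y.1, (hdelV y.1).mpr y.2⟩,
        Sum.elim (fun x => ⟨x.1, (hdelV x.1).mp x.2⟩)
          (fun v => (v.2 () rfl).elim),
        fun y => rfl, ?_⟩,
      ⟨fun y => Sum.inl ⟨y.1, (hdelE y.1).mpr y.2⟩,
        Sum.elim (fun x => ⟨x.1, (hdelE x.1).mp x.2⟩)
          (fun e => PEmpty.elim e.1),
        fun y => rfl, ?_⟩, ?_, ?_⟩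
    · rintro (x | v)
      · rfl
      · exact (v.2 () rfl).elim
    · rintro (x | e)
      · rfl
      · exact PEmpty.elim e.1
    · intro e; rfl
    · intro e; rfl
  exact (delLeaf_isTree_iff hs' ht').trans q.isTree_iff

/-! ### rule r1 -/

lemma r1_case (g : Morphism r1.L G) (h : r1.Applicable G g) :
    IsTree G ↔ IsTree (r1.result G g h) := by
  have hT : G.t (g.fE ()) = g.fV (1 : Fin 2) := (g.tgt ()).symm
  have hS : G.s (g.fE ()) = g.fV (0 : Fin 2) := (g.src ()).symm
  have h01 : g.fV (0 : Fin 2) ≠ g.fV (1 : Fin 2) := fun h' => absurd (show (0 : Fin 2) = 1 from h.1.1 h') (by simp [Fin.ext_iff])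
  have hno1 : ∀ k : r1.K.V, r1.incL.fV k ≠ (1 : Fin 2) :=
    fun k hk => absurd (show (0 : Fin 2) = 1 from hk) (by simp [Fin.ext_iff])
  have hdang : ∀ e : G.E, e ≠ g.fE () →
      G.s e ≠ g.fV (1 : Fin 2) ∧ G.t e ≠ g.fV (1 : Fin 2) := by
    intro e hc
    exact h.2 e (fun e' he' => hc (by cases e'; exact he'.symm)) (1 : Fin 2) hno1
  have hs' : ∀ e, G.s e ≠ G.t (g.fE ()) := by
    intro e heq
    rw [hT] at heq
    by_cases hc : e = g.fE ()
    · rw [hc, hS] at heq; exact h01 heq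
    · exact (hdang e hc).1 heq
  have ht' : ∀ e, G.t e = G.t (g.fE ()) → e = g.fE () := by
    intro e heq
    by_contra hc
    rw [hT] at heq
    exact (hdang e hc).2 heq
  have hdelV : ∀ x : G.V, x ∉ r1.DelV G g ↔ x ≠ G.t (g.fE ()) := by
    intro x
    rw [hT]
    constructor
    · intro hx heq
      exact hx ⟨(1 : Fin 2), hno1, heq.symm⟩
    · rintro hx ⟨v, hv, rfl⟩
      have hv1 : v = (1 : Fin 2) := by
        have h0' : v.val ≠ 0 := fun h => hv () (Fin.ext h.symm)
        have hlt := v.isLt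
        exact Fin.ext (show v.val = 1 by omega)
      rw [hv1] at hx
      exact hx rfl
  have hdelE : ∀ x : G.E, x ∉ r1.DelE G g ↔ x ≠ g.fE () := by
    intro x
    constructor
    · intro hx heq
      exact hx ⟨(), fun k => k.elim, heq.symm⟩
    · rintro hx ⟨e, _, rfl⟩
      cases e
      exact hx rfl
  have q : SEquiv (delLeaf G (g.fE ()) hs' ht') (r1.result G g h) := by
    refine ⟨⟨fun y => Sum.inl ⟨y.1, (hdelV y.1).mpr y.2⟩,
        Sum.elim (fun x => ⟨x.1, (hdelV x.1).mp x.2⟩)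
          (fun v => (v.2 () rfl).elim),
        fun y => rfl, ?_⟩,
      ⟨fun y => Sum.inl ⟨y.1, (hdelE y.1).mpr y.2⟩,
        Sum.elim (fun x => ⟨x.1, (hdelE x.1).mp x.2⟩)
          (fun e => PEmpty.elim e.1),
        fun y => rfl, ?_⟩, ?_, ?_⟩
    · rintro (x | v)
      · rfl
      · exact (v.2 () rfl).elim
    · rintro (x | e)
      · rfl
      · exact PEmpty.elim e.1
    · intro e; rfl
    · intro e; rfl
  exact (delLeaf_isTree_iff hs' ht').trans q.isTree_iff

/-! ### rule r2 -/

lemma r2_case (g : Morphism r2.L G) (h : r2.Applicable G g) :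
    IsTree G ↔ IsTree (r2.result G g h) := by
  have hT : G.t (g.fE ()) = g.fV (1 : Fin 2) := (g.tgt ()).symm
  have hS : G.s (g.fE ()) = g.fV (0 : Fin 2) := (g.src ()).symm
  have hdelV : ∀ x : G.V, x ∉ r2.DelV G g := by
    rintro x ⟨v, hv, rfl⟩
    exact hv v rfl
  have hdelE : ∀ x : G.E, x ∈ r2.DelE G g → x = g.fE () := by
    rintro x ⟨e, _, rfl⟩
    cases e
    rfl
  have q : SEquiv G (r2.result G g h) := by
    refine ⟨⟨fun v => Sum.inl ⟨v, hdelV v⟩,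
        Sum.elim (fun x => x.1) (fun v => absurd rfl (v.2 v.1)),
        fun v => rfl, ?_⟩,
      ⟨fun e => if he : e = g.fE () then Sum.inr ⟨(), fun k => PEmpty.elim k⟩
          else Sum.inl ⟨e, fun hmem => he (hdelE e hmem)⟩,
        Sum.elim (fun x => x.1) (fun _ => g.fE ()),
        ?_, ?_⟩, ?_, ?_⟩
    · rintro (x | v)
      · rfl
      · exact absurd rfl (v.2 v.1)
    · intro e
      by_cases he : e = g.fE ()
      · exact (congrArg (Sum.elim _ _) (dif_pos he)).trans he.symm
      · exact (congrArg (Sum.elim _ _) (dif_neg he)).trans rfl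
    · rintro (x | x)
      · by_cases hx : (x.1 : G.E) = g.fE ()
        · exact absurd hx (fun hx' => x.2 ⟨(), fun k => PEmpty.elim k, hx'.symm⟩)
        · exact (dif_neg hx).trans rfl
      · exact (dif_pos (rfl : g.fE () = g.fE ())).trans (congrArg Sum.inr (Subtype.ext rfl))
    · intro e
      show (Sum.inl ⟨G.s e, hdelV _⟩ : (r2.result G g h).V) = (r2.result G g h).s
        (if he : e = g.fE () then Sum.inr ⟨(), fun k => PEmpty.elim k⟩
          else Sum.inl ⟨e, fun hmem => he (hdelE e hmem)⟩)
      by_cases he : e = g.fE ()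
      · have X : (if he : e = g.fE () then (Sum.inr ⟨(), fun k => PEmpty.elim k⟩ : (r2.result G g h).E)
            else Sum.inl ⟨e, fun hmem => he (hdelE e hmem)⟩) = Sum.inr ⟨(), fun k => PEmpty.elim k⟩ := dif_pos he
        refine Eq.trans ?_ (congrArg (r2.result G g h).s X).symm
        rw [result_s_inr r2 G g h _ (0 : Fin 2) rfl (fun a b hab => hab)]
        refine congrArg Sum.inl (Subtype.ext ?_)
        rw [he, hS]
        rfl
      · have X : (if he : e = g.fE () then (Sum.inr ⟨(), fun k => PEmpty.elim k⟩ : (r2.result G g h).E)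
            else Sum.inl ⟨e, fun hmem => he (hdelE e hmem)⟩) = Sum.inl ⟨e, fun hmem => he (hdelE e hmem)⟩ := dif_neg he
        exact Eq.trans rfl (congrArg (r2.result G g h).s X).symm
    · intro e
      show (Sum.inl ⟨G.t e, hdelV _⟩ : (r2.result G g h).V) = (r2.result G g h).t
        (if he : e = g.fE () then Sum.inr ⟨(), fun k => PEmpty.elim k⟩
          else Sum.inl ⟨e, fun hmem => he (hdelE e hmem)⟩)
      by_cases he : e = g.fE ()
      · have X : (if he : e = g.fE () then (Sum.inr ⟨(), fun k => PEmpty.elim k⟩ : (r2.result G g h).E)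
            else Sum.inl ⟨e, fun hmem => he (hdelE e hmem)⟩) = Sum.inr ⟨(), fun k => PEmpty.elim k⟩ := dif_pos he
        refine Eq.trans ?_ (congrArg (r2.result G g h).t X).symm
        rw [result_t_inr r2 G g h _ (1 : Fin 2) rfl (fun a b hab => hab)]
        refine congrArg Sum.inl (Subtype.ext ?_)
        rw [he, hT]
        rfl
      · have X : (if he : e = g.fE () then (Sum.inr ⟨(), fun k => PEmpty.elim k⟩ : (r2.result G g h).E)
            else Sum.inl ⟨e, fun hmem => he (hdelE e hmem)⟩) = Sum.inl ⟨e, fun hmem => he (hdelE e hmem)⟩ := dif_neg he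
        exact Eq.trans rfl (congrArg (r2.result G g h).t X).symm
  exact q.isTree_iff

end RuleLemmas
/-- In the tree-recognition system, a direct derivation sends trees to trees
and non-trees to non-trees. -/
theorem tree_step_preservation (G H : GTGraph NodeLab Unit)
    (hG : G.IsTLRG) (hH : H.IsTLRG)
    (hstep : GTStep TreeRules G H) :
    (IsTree G → IsTree H) ∧ (¬ IsTree G → ¬ IsTree H) := by
  obtain ⟨r, hr, g, happ, ⟨iso⟩⟩ := hstep
  have h2 : IsTree (r.result G g happ) ↔ IsTree H := iso.sequiv.isTree_iff
  simp only [TreeRules, Set.mem_insert_iff, Set.mem_singleton_iff] at hr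
  rcases hr with rfl | rfl | rfl
  · have h1 := r0_case G g happ
    exact ⟨fun h => h2.mp (h1.mp h), fun h hH' => h (h1.mpr (h2.mpr hH'))⟩
  · have h1 := r1_case G g happ
    exact ⟨fun h => h2.mp (h1.mp h), fun h hH' => h (h1.mpr (h2.mpr hH'))⟩
  · have h1 := r2_case G g happ
    exact ⟨fun h => h2.mp (h1.mp h), fun h hH' => h (h1.mpr (h2.mpr hH'))⟩
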